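/- Let E be a Banach space. If every bounded linear operator from E into (L^1[0,1])* is completely continuous, then E has the Schur property. -/

import Mathlib

open Filter Topology MeasureTheory

/-- A sequence in a normed space is *weakly null* if it converges to `0` in the weak topology,
i.e. `φ (x n) → 0` for every continuous linear functional `φ`. -/
def WeaklyNull {E : Type*} [NormedAddCommGroup E] [NormedSpace ℝ E] (x : ℕ → E) : Prop :=
  ∀ φ : E →L[ℝ] ℝ, Tendsto (fun n => φ (x n)) atTop (𝓝 0)

/-- An operator is *completely continuous* if it maps weakly convergent sequences to norm
convergent sequences. -/
def CompletelyContinuous {E F : Type*} [NormedAddCommGroup E] [NormedSpace ℝ E]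
    [NormedAddCommGroup F] [NormedSpace ℝ F] (T : E →L[ℝ] F) : Prop :=
  ∀ (x : ℕ → E) (x₀ : E),
    (∀ φ : E →L[ℝ] ℝ, Tendsto (fun n => φ (x n)) atTop (𝓝 (φ x₀))) →
    Tendsto (fun n => T (x n)) atTop (𝓝 (T x₀))

/-- A Banach space has the *Schur property* if every weakly null sequence is norm null. -/
def SchurProperty (E : Type*) [NormedAddCommGroup E] [NormedSpace ℝ E] : Prop :=
  ∀ x : ℕ → E, WeaklyNull x → Tendsto x atTop (𝓝 0)

/-- A Banach space has the *Dunford–Pettis property* if `φₙ(xₙ) → 0` whenever `(xₙ)` is weakly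
null in `E` and `(φₙ)` is weakly null in the dual `E*`. -/
def DunfordPettisProperty (E : Type*) [NormedAddCommGroup E] [NormedSpace ℝ E] : Prop :=
  ∀ (x : ℕ → E) (φ : ℕ → E →L[ℝ] ℝ), WeaklyNull x → WeaklyNull φ →
    Tendsto (fun n => φ n (x n)) atTop (𝓝 0)

/-- `F` contains a (closed, isomorphic) copy of `X`: there is an isomorphic embedding of `X`
into `F` (its range is automatically a closed subspace when `X` is complete). -/
def ContainsCopy (F X : Type*) [NormedAddCommGroup F] [NormedSpace ℝ F]
    [NormedAddCommGroup X] [NormedSpace ℝ X] : Prop :=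
  ∃ (e : X →L[ℝ] F) (c : ℝ), 0 < c ∧ ∀ x, c * ‖x‖ ≤ ‖e x‖

/-- `F` contains a *complemented* copy of `X`: there is an embedding `e : X → F` admitting a
bounded linear left inverse (equivalently, a complemented closed subspace isomorphic to `X`). -/
def ContainsComplementedCopy (F X : Type*) [NormedAddCommGroup F] [NormedSpace ℝ F]
    [NormedAddCommGroup X] [NormedSpace ℝ X] : Prop :=
  ∃ (e : X →L[ℝ] F) (r : F →L[ℝ] X), r.comp e = ContinuousLinearMap.id ℝ X

/-- A realization of the projective tensor product `E ⊗̂π F` as a Banach space `X`: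
a bounded bilinear map `tmul` of norm `≤ 1` whose range spans a dense subspace, and such that
every bounded bilinear form on `E × F` lifts to a functional on `X` of no greater norm.
Together with completeness of `X`, these properties characterize `E ⊗̂π F` up to isometric
isomorphism. -/
structure ProjectiveTensorProduct (X E F : Type*) [NormedAddCommGroup X] [NormedSpace ℝ X]
    [NormedAddCommGroup E] [NormedSpace ℝ E] [NormedAddCommGroup F] [NormedSpace ℝ F] where
  tmul : E →L[ℝ] F →L[ℝ] X
  norm_tmul_le : ∀ x y, ‖tmul x y‖ ≤ ‖x‖ * ‖y‖
  dense_span : Dense (↑(Submodule.span ℝ (Set.range fun p : E × F => tmul p.1 p.2)) : Set X)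
  lift : ∀ B : E →L[ℝ] F →L[ℝ] ℝ, ∃ φ : X →L[ℝ] ℝ, ‖φ‖ ≤ ‖B‖ ∧ ∀ x y, φ (tmul x y) = B x y

/-- A realization of the injective tensor product `E ⊗̂ε F` as a Banach space `X`:
a bilinear map `tmul` whose range spans a dense subspace and such that the norm of any finite
sum of elementary tensors is the injective norm
`sup { |Σ φ(xᵢ) ψ(yᵢ)| : ‖φ‖ ≤ 1, ‖ψ‖ ≤ 1 }`.  Together with completeness of `X`, these
properties characterize `E ⊗̂ε F` up to isometric isomorphism. -/
structure InjectiveTensorProduct (X E F : Type*) [NormedAddCommGroup X] [NormedSpace ℝ X]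
    [NormedAddCommGroup E] [NormedSpace ℝ E] [NormedAddCommGroup F] [NormedSpace ℝ F] where
  tmul : E →L[ℝ] F →L[ℝ] X
  dense_span : Dense (↑(Submodule.span ℝ (Set.range fun p : E × F => tmul p.1 p.2)) : Set X)
  norm_sum : ∀ (n : ℕ) (x : Fin n → E) (y : Fin n → F),
    ‖∑ i, tmul (x i) (y i)‖ =
      sSup { r : ℝ | ∃ (φ : E →L[ℝ] ℝ) (ψ : F →L[ℝ] ℝ), ‖φ‖ ≤ 1 ∧ ‖ψ‖ ≤ 1 ∧
        r = |∑ i, φ (x i) * ψ (y i)| }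

/-- The Banach space `ℓ₁` of absolutely summable real sequences. -/
noncomputable abbrev ellOne : Type := lp (fun _ : ℕ => ℝ) 1

/-- The Banach space `L¹[0,1]`. -/
noncomputable abbrev LOneUnitInterval : Type :=
  Lp ℝ 1 ((volume : Measure ℝ).restrict (Set.Icc 0 1))


noncomputable section SchurAux
namespace SchurAux

abbrev μ01 : Measure ℝ := (volume : Measure ℝ).restrict (Set.Icc 0 1)

/-- Disjoint dyadic subintervals of `[0,1]`. -/
def I (k : ℕ) : Set ℝ := Set.Ioc ((2:ℝ)⁻¹ ^ (k+1)) ((2:ℝ)⁻¹ ^ k)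

lemma measurableSet_I (k : ℕ) : MeasurableSet (I k) := measurableSet_Ioc

lemma I_subset (k : ℕ) : I k ⊆ Set.Icc 0 1 := by
  intro x hx
  obtain ⟨h1, h2⟩ := hx
  constructor
  · exact le_of_lt (lt_of_le_of_lt (by positivity) h1)
  · exact h2.trans (pow_le_one₀ (by norm_num) (by norm_num))

lemma pairwise_disjoint_I : Pairwise (Function.onFun Disjoint I) := by
  have key : ∀ j k : ℕ, j < k → Disjoint (I j) (I k) := by
    intro j k hjk
    rw [Set.disjoint_left]
    rintro x ⟨hx1, _⟩ ⟨_, hx4⟩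
    have : (2:ℝ)⁻¹ ^ k ≤ (2:ℝ)⁻¹ ^ (j+1) :=
      pow_le_pow_of_le_one (by norm_num) (by norm_num) hjk
    linarith
  intro j k hjk
  rcases lt_or_gt_of_ne hjk with h | h
  · exact key j k h
  · exact (key k j h).symm

lemma μ01_I (k : ℕ) : μ01 (I k) = ENNReal.ofReal ((2:ℝ)⁻¹ ^ (k+1)) := by
  rw [μ01, Measure.restrict_apply (measurableSet_I k),
    Set.inter_eq_left.mpr (I_subset k), I, Real.volume_Ioc]
  congr 1
  ring

lemma μ01_I_ne_top (k : ℕ) : μ01 (I k) ≠ ⊤ := by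
  rw [μ01_I]; exact ENNReal.ofReal_ne_top

lemma μ01_I_toReal (k : ℕ) : (μ01 (I k)).toReal = (2:ℝ)⁻¹ ^ (k+1) := by
  rw [μ01_I, ENNReal.toReal_ofReal (by positivity)]

abbrev L1I : Type := Lp ℝ 1 μ01

/-- Integration over `I k` as a functional on `L¹[0,1]`. -/
def ψ (k : ℕ) (f : L1I) : ℝ := ∫ x in I k, f x ∂μ01

lemma summable_setIntegral_norm (f : L1I) :
    Summable (fun k => ∫ x in I k, ‖f x‖ ∂μ01) := by
  have hint : Integrable (fun x => ‖f x‖) μ01 := (L1.integrable_coeFn f).norm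
  exact (hasSum_integral_iUnion measurableSet_I pairwise_disjoint_I
    hint.integrableOn).summable

lemma tsum_setIntegral_norm_le (f : L1I) :
    ∑' k, ∫ x in I k, ‖f x‖ ∂μ01 ≤ ‖f‖ := by
  have hint : Integrable (fun x => ‖f x‖) μ01 := (L1.integrable_coeFn f).norm
  have h := hasSum_integral_iUnion measurableSet_I pairwise_disjoint_I
    hint.integrableOn
  rw [h.tsum_eq, L1.norm_eq_integral_norm]
  exact setIntegral_le_integral hint (Filter.Eventually.of_forall fun x => norm_nonneg _)

lemma abs_ψ_le (k : ℕ) (f : L1I) : |ψ k f| ≤ ∫ x in I k, ‖f x‖ ∂μ01 := by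
  rw [← Real.norm_eq_abs]
  exact norm_integral_le_integral_norm _

lemma ψ_add (k : ℕ) (f g : L1I) : ψ k (f + g) = ψ k f + ψ k g := by
  unfold ψ
  rw [setIntegral_congr_ae (measurableSet_I k)
    ((Lp.coeFn_add f g).mono fun x hx _ => hx)]
  exact integral_add ((L1.integrable_coeFn f).integrableOn)
    ((L1.integrable_coeFn g).integrableOn)

lemma ψ_smul (k : ℕ) (c : ℝ) (f : L1I) : ψ k (c • f) = c * ψ k f := by
  unfold ψ
  rw [setIntegral_congr_ae (measurableSet_I k)
    ((Lp.coeFn_smul c f).mono fun x hx _ => hx)]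
  exact integral_smul c _

variable {E : Type*} [NormedAddCommGroup E] [NormedSpace ℝ E]

section Tconstr
variable (φ : ℕ → E →L[ℝ] ℝ) (hφ : ∀ k, ‖φ k‖ ≤ 1)

include hφ in
lemma summable_B (e : E) (f : L1I) :
    Summable (fun k => φ k e * ψ k f) := by
  apply Summable.of_norm_bounded (g := fun k => ‖e‖ * ∫ x in I k, ‖f x‖ ∂μ01)
    ((summable_setIntegral_norm f).mul_left _)
  intro k
  rw [norm_mul]
  refine mul_le_mul ?_ ((Real.norm_eq_abs _) ▸ abs_ψ_le k f) (norm_nonneg _)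
    (by positivity)
  calc ‖φ k e‖ ≤ ‖φ k‖ * ‖e‖ := (φ k).le_opNorm e
    _ ≤ 1 * ‖e‖ := by gcongr; exact hφ k
    _ = ‖e‖ := one_mul _

include hφ in
lemma norm_B_le (e : E) (f : L1I) :
    ‖∑' k, φ k e * ψ k f‖ ≤ 1 * ‖e‖ * ‖f‖ := by
  calc ‖∑' k, φ k e * ψ k f‖ ≤ ∑' k, ‖φ k e * ψ k f‖ :=
        norm_tsum_le_tsum_norm ((summable_B φ hφ e f).norm)
    _ ≤ ∑' k, ‖e‖ * ∫ x in I k, ‖f x‖ ∂μ01 := by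
        apply Summable.tsum_le_tsum _ ((summable_B φ hφ e f).norm)
          (((summable_setIntegral_norm f)).mul_left _)
        intro k
        rw [norm_mul]
        refine mul_le_mul ?_ ((Real.norm_eq_abs _) ▸ abs_ψ_le k f) (norm_nonneg _)
          (by positivity)
        calc ‖φ k e‖ ≤ ‖φ k‖ * ‖e‖ := (φ k).le_opNorm e
          _ ≤ 1 * ‖e‖ := by gcongr; exact hφ k
          _ = ‖e‖ := one_mul _
    _ = ‖e‖ * ∑' k, ∫ x in I k, ‖f x‖ ∂μ01 := tsum_mul_left
    _ ≤ ‖e‖ * ‖f‖ := by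
        refine mul_le_mul_of_nonneg_left (tsum_setIntegral_norm_le f) (norm_nonneg _)
    _ = 1 * ‖e‖ * ‖f‖ := by ring

/-- The operator `e ↦ (f ↦ ∑ₖ φₖ(e) ∫_{I k} f)` from `E` into `(L¹[0,1])*`. -/
def T (hφ : ∀ k, ‖φ k‖ ≤ 1) : E →L[ℝ] (L1I →L[ℝ] ℝ) :=
  LinearMap.mkContinuous₂
    (LinearMap.mk₂ ℝ (fun e f => ∑' k, φ k e * ψ k f)
      (fun e e' f => by
        rw [← Summable.tsum_add (summable_B φ hφ e f) (summable_B φ hφ e' f)]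
        exact tsum_congr fun k => by rw [map_add]; ring)
      (fun c e f => by
        rw [smul_eq_mul, ← tsum_mul_left]
        exact tsum_congr fun k => by
          rw [ContinuousLinearMap.map_smul, smul_eq_mul, mul_assoc])
      (fun e f f' => by
        rw [← Summable.tsum_add (summable_B φ hφ e f) (summable_B φ hφ e f')]
        exact tsum_congr fun k => by rw [ψ_add]; ring)
      (fun c e f => by
        rw [smul_eq_mul, ← tsum_mul_left]
        exact tsum_congr fun k => by rw [ψ_smul]; ring))
    1 (fun e f => norm_B_le φ hφ e f)

lemma T_apply (e : E) (f : L1I) : T φ hφ e f = ∑' k, φ k e * ψ k f := rfl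

end Tconstr

/-- Normalized indicator test functions. -/
def g (k : ℕ) : L1I :=
  indicatorConstLp 1 (measurableSet_I k) (μ01_I_ne_top k) ((2:ℝ) ^ (k+1))

lemma norm_g (k : ℕ) : ‖g k‖ = 1 := by
  rw [g, norm_indicatorConstLp one_ne_zero ENNReal.one_ne_top, measureReal_def, μ01_I_toReal]
  norm_num [Real.norm_eq_abs, ← mul_pow]

lemma ψ_g_same (k : ℕ) : ψ k (g k) = 1 := by
  rw [ψ, g, setIntegral_indicatorConstLp (measurableSet_I k) (measurableSet_I k)
    (μ01_I_ne_top k), Set.inter_self, measureReal_def, μ01_I_toReal, smul_eq_mul, ← mul_pow]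
  norm_num

lemma ψ_g_ne (j k : ℕ) (h : j ≠ k) : ψ j (g k) = 0 := by
  rw [ψ, g, setIntegral_indicatorConstLp (measurableSet_I j) (measurableSet_I k)
    (μ01_I_ne_top k)]
  rw [Set.disjoint_iff_inter_eq_empty.mp (pairwise_disjoint_I (Ne.symm h))]
  simp

end SchurAux
end SchurAux

/-- If every bounded operator from `E` into `(L¹[0,1])*` is completely continuous, then `E`
has the Schur property. -/
theorem schurProperty_of_forall_completelyContinuous_into_dual_LOne
    {E : Type*} [NormedAddCommGroup E] [NormedSpace ℝ E] [CompleteSpace E]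
    (hcc : ∀ T : E →L[ℝ] (LOneUnitInterval →L[ℝ] ℝ), CompletelyContinuous T) :
    SchurProperty E := by
  intro x hx
  have hdual : ∀ n, ∃ φ : E →L[ℝ] ℝ, ‖φ‖ ≤ 1 ∧ φ (x n) = ‖x n‖ := by
    intro n
    by_cases h : x n = 0
    · exact ⟨0, by simp, by simp [h]⟩
    · obtain ⟨ν, hν1, hν2⟩ := exists_dual_vector ℝ (x n) (norm_ne_zero_iff.mpr h)
      exact ⟨ν, le_of_eq hν1, hν2⟩
  choose φ hφ1 hφ2 using hdual
  set T : E →L[ℝ] (LOneUnitInterval →L[ℝ] ℝ) := SchurAux.T φ hφ1 with hT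
  have hTx : Tendsto (fun n => T (x n)) atTop (𝓝 (T 0)) :=
    hcc T x 0 (fun ψ => by simpa using hx ψ)
  rw [map_zero] at hTx
  have hnorm : Tendsto (fun n => ‖T (x n)‖) atTop (𝓝 0) := by
    simpa using hTx.norm
  have hle : ∀ n, ‖x n‖ ≤ ‖T (x n)‖ := by
    intro n
    have h1 : T (x n) (SchurAux.g n) = φ n (x n) := by
      rw [hT, SchurAux.T_apply, tsum_eq_single n
        (fun j hj => by rw [SchurAux.ψ_g_ne j n hj]; ring),
        SchurAux.ψ_g_same, mul_one]
    calc ‖x n‖ = φ n (x n) := (hφ2 n).symm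
      _ ≤ |φ n (x n)| := le_abs_self _
      _ = ‖T (x n) (SchurAux.g n)‖ := by rw [h1, Real.norm_eq_abs]
      _ ≤ ‖T (x n)‖ * ‖SchurAux.g n‖ := (T (x n)).le_opNorm _
      _ = ‖T (x n)‖ := by rw [SchurAux.norm_g, mul_one]
  rw [tendsto_zero_iff_norm_tendsto_zero]
  exact squeeze_zero (fun n => norm_nonneg _) hle hnorm
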